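/- Consider the innovations-form system with matrices (A, B_u, K, C, D), extended input ū = col(u, e), input matrix B̄ = [B_u, K] and feedthrough D̄ = [D, I_{n_y}]. Let {(ū^d(k), y^d(k))}_{k=1}^{K} be a length-K trajectory, let T = T_p + T_f with T_p ≥ n_x, and assume (A, [B_u, K]) is controllable, (A, C) is observable, and ū^d is persistently exciting of order T + n_x. Partition H_T(ū^d_{1:K}) into its first T_p block rows H_ūp and last T_f block rows H_ūf, and H_T(y^d_{1:K}) into H_yp and H_yf. Suppose (ū_p, y_p) is a length-T_p trajectory of the innovations-form system and ū_f ∈ ℝ^{(n_u+n_y) T_f} is a future extended input. Then there exists a unique y_f ∈ ℝ^{n_y T_f} such that (col(ū_p, ū_f), col(y_p, y_f)) is a length-T trajectory, and a vector y_f equals this unique continuation if and only if there exists g ∈ ℝ^{M} with ū_p = H_ūp g, ū_f = H_ūf g, y_p = H_yp g, and y_f = H_yf g. -/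

import Mathlib

open Matrix

/-- `(u, y)` restricted to the (0-based) indices `0, …, T-1` is a length-`T`
input–output trajectory of the LTI system `(A, B, C, D)`. -/
def IsTraj {nx : ℕ} {ι κ : Type*} [Fintype ι]
    (A : Matrix (Fin nx) (Fin nx) ℝ) (B : Matrix (Fin nx) ι ℝ)
    (C : Matrix κ (Fin nx) ℝ) (D : Matrix κ ι ℝ)
    (T : ℕ) (u : ℕ → ι → ℝ) (y : ℕ → κ → ℝ) : Prop :=
  ∃ x : ℕ → Fin nx → ℝ, ∀ k < T,
    x (k + 1) = A.mulVec (x k) + B.mulVec (u k) ∧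
    y k = C.mulVec (x k) + D.mulVec (u k)

/-- Hankel matrix of depth `T` built from the first `K` samples of `ζ`. -/
def Hankel {ι : Type*} (T K : ℕ) (ζ : ℕ → ι → ℝ) :
    Matrix (Fin T × ι) (Fin (K - T + 1)) ℝ :=
  fun p j => ζ ((p.1 : ℕ) + (j : ℕ)) p.2

/-- The first `Tp` block rows of the depth-`(Tp + Tf)` Hankel matrix with `M` columns. -/
def HankelPast {ι : Type*} (Tp M : ℕ) (ζ : ℕ → ι → ℝ) :
    Matrix (Fin Tp × ι) (Fin M) ℝ :=
  fun p j => ζ ((p.1 : ℕ) + (j : ℕ)) p.2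

/-- The last `Tf` block rows of the depth-`(Tp + Tf)` Hankel matrix with `M` columns. -/
def HankelFut {ι : Type*} (Tp Tf M : ℕ) (ζ : ℕ → ι → ℝ) :
    Matrix (Fin Tf × ι) (Fin M) ℝ :=
  fun p j => ζ (Tp + (p.1 : ℕ) + (j : ℕ)) p.2

/-- Stacked (column) vector `col(z(0), …, z(T-1))`. -/
def stack {ι : Type*} (T : ℕ) (z : ℕ → ι → ℝ) : Fin T × ι → ℝ :=
  fun p => z (p.1 : ℕ) p.2

/-- Concatenation of a past sequence (its first `Tp` samples) with a future
finite sequence of length `Tf`. -/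
def glue {ι : Type*} (Tp Tf : ℕ) (past : ℕ → ι → ℝ) (fut : Fin Tf → ι → ℝ) :
    ℕ → ι → ℝ :=
  fun k => if k < Tp then past k else if h : k - Tp < Tf then fut ⟨k - Tp, h⟩ else 0

/-- Controllability matrix `[B, AB, …, A^{nx-1}B]`. -/
def ctrbMat {nx : ℕ} {ι : Type*} [Fintype ι]
    (A : Matrix (Fin nx) (Fin nx) ℝ) (B : Matrix (Fin nx) ι ℝ) :
    Matrix (Fin nx) (Fin nx × ι) ℝ :=
  fun i p => (A ^ (p.1 : ℕ) * B) i p.2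

/-- Observability matrix `col(C, CA, …, CA^{nx-1})`. -/
def obsvMat {nx : ℕ} {κ : Type*}
    (A : Matrix (Fin nx) (Fin nx) ℝ) (C : Matrix κ (Fin nx) ℝ) :
    Matrix (Fin nx × κ) (Fin nx) ℝ :=
  fun p j => (C * A ^ (p.1 : ℕ)) p.2 j


section DDSimAux

lemma mulVec_inj_of_rank {m n : Type*} [Fintype m] [Fintype n] (M : Matrix m n ℝ)
    (h : M.rank = Fintype.card n) : ∀ v, M.mulVec v = 0 → v = 0 := by
  have hk : LinearMap.ker M.mulVecLin = ⊥ := by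
    have := LinearMap.finrank_range_add_finrank_ker M.mulVecLin
    rw [show Module.finrank ℝ (n → ℝ) = Fintype.card n from Module.finrank_fintype_fun_eq_card ℝ]
      at this
    have hr : Module.finrank ℝ (LinearMap.range M.mulVecLin) = Fintype.card n := h
    rw [← Submodule.finrank_eq_zero (S := LinearMap.ker M.mulVecLin)]
    omega
  intro v hv
  have : v ∈ LinearMap.ker M.mulVecLin := hv
  rw [hk] at this; simpa using this

lemma vecMul_inj_of_rank {m n : Type*} [Fintype m] [Fintype n] (M : Matrix m n ℝ)
    (h : M.rank = Fintype.card m) : ∀ w, Matrix.vecMul w M = 0 → w = 0 := by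
  intro w hw
  refine mulVec_inj_of_rank Mᵀ ?_ w ?_
  · rw [Matrix.rank_transpose]; exact h
  · rw [Matrix.mulVec_transpose]; exact hw

lemma mulVec_surj_of_vecMul_inj {m n : Type*} [Fintype m] [Fintype n] (M : Matrix m n ℝ)
    (h : ∀ w, Matrix.vecMul w M = 0 → w = 0) : Function.Surjective M.mulVec := by
  have hk : LinearMap.ker Mᵀ.mulVecLin = ⊥ := by
    rw [LinearMap.ker_eq_bot']
    intro w hw
    exact h w (by rw [← Matrix.mulVec_transpose]; exact hw)
  have hrT : Mᵀ.rank = Fintype.card m := by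
    have := LinearMap.finrank_range_add_finrank_ker Mᵀ.mulVecLin
    rw [hk] at this
    rw [show Module.finrank ℝ (⊥ : Submodule ℝ (m → ℝ)) = 0 by simp, add_zero] at this
    rw [Matrix.rank, this, Module.finrank_fintype_fun_eq_card]
  have hr : M.rank = Fintype.card m := by rw [← Matrix.rank_transpose]; exact hrT
  have htop : LinearMap.range M.mulVecLin = ⊤ := by
    apply Submodule.eq_top_of_finrank_eq
    rw [Module.finrank_fintype_fun_eq_card]; exact hr
  intro v
  have : v ∈ LinearMap.range M.mulVecLin := htop ▸ Submodule.mem_top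
  obtain ⟨g, hg⟩ := this
  exact ⟨g, hg⟩

lemma mulVec_sum_smul {n m κ : Type*} [Fintype n] [Fintype κ] (A : Matrix m n ℝ)
    (g : κ → ℝ) (v : κ → n → ℝ) :
    A.mulVec (∑ j, g j • v j) = ∑ j, g j • A.mulVec (v j) := by
  rw [show A.mulVec (∑ j, g j • v j) = A.mulVecLin (∑ j, g j • v j) from rfl, map_sum]
  simp [Matrix.mulVecLin_apply]

lemma state_evol {nx : ℕ} {ι : Type*} [Fintype ι]
    (A : Matrix (Fin nx) (Fin nx) ℝ) (B : Matrix (Fin nx) ι ℝ)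
    (u : ℕ → ι → ℝ) (x : ℕ → Fin nx → ℝ) (N : ℕ)
    (hrec : ∀ k < N, x (k+1) = A.mulVec (x k) + B.mulVec (u k)) :
    ∀ s j, j + s ≤ N → x (j+s) = (A^s).mulVec (x j)
      + ∑ r ∈ Finset.range s, ((A^(s-1-r) * B).mulVec (u (j+r))) := by
  intro s
  induction s with
  | zero => intro j _; simp
  | succ s ih =>
    intro j hj
    have h1 : x (j+s+1) = A.mulVec (x (j+s)) + B.mulVec (u (j+s)) := hrec _ (by omega)
    rw [show j + (s+1) = (j+s)+1 from rfl, h1, ih j (by omega)]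
    rw [Matrix.mulVec_add, Finset.sum_range_succ]
    have e1 : A.mulVec ((A^s).mulVec (x j)) = (A^(s+1)).mulVec (x j) := by
      rw [Matrix.mulVec_mulVec, ← pow_succ']
    have e2 : A.mulVec (∑ r ∈ Finset.range s, (A^(s-1-r) * B).mulVec (u (j+r)))
        = ∑ r ∈ Finset.range s, ((A^(s+1-1-r) * B).mulVec (u (j+r))) := by
      rw [show A.mulVec (∑ r ∈ Finset.range s, (A^(s-1-r) * B).mulVec (u (j+r)))
          = A.mulVecLin (∑ r ∈ Finset.range s, (A^(s-1-r) * B).mulVec (u (j+r))) from rfl,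
        map_sum]
      refine Finset.sum_congr rfl fun r hr => ?_
      rw [Finset.mem_range] at hr
      rw [Matrix.mulVecLin_apply, Matrix.mulVec_mulVec, ← Matrix.mul_assoc,
        show A * A^(s-1-r) = A^(s-r) by rw [← pow_succ']; congr 1; omega,
        show s+1-1-r = s-r from by omega]
    rw [e1, e2]
    rw [show s+1-1-s = 0 from by omega, pow_zero, Matrix.one_mul]
    abel

lemma state_unique {nx : ℕ} {ι : Type*} [Fintype ι]
    (A : Matrix (Fin nx) (Fin nx) ℝ) (B : Matrix (Fin nx) ι ℝ)
    (u : ℕ → ι → ℝ) (x x' : ℕ → Fin nx → ℝ) (N : ℕ)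
    (hrec : ∀ k < N, x (k+1) = A.mulVec (x k) + B.mulVec (u k))
    (hrec' : ∀ k < N, x' (k+1) = A.mulVec (x' k) + B.mulVec (u k))
    (h0 : x 0 = x' 0) : ∀ k, k ≤ N → x k = x' k := by
  intro k
  induction k with
  | zero => intro _; exact h0
  | succ k ih =>
    intro hk
    rw [hrec k (by omega), hrec' k (by omega), ih (by omega)]

lemma dot_sum {n κ : Type*} [Fintype n] (v : n → ℝ) (s : Finset κ) (w : κ → n → ℝ) :
    v ⬝ᵥ (∑ k ∈ s, w k) = ∑ k ∈ s, v ⬝ᵥ w k := by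
  simp only [dotProduct, Finset.sum_apply, Finset.mul_sum]
  rw [Finset.sum_comm]

lemma willems {nx : ℕ} {ι : Type*} [Fintype ι]
    (A : Matrix (Fin nx) (Fin nx) ℝ) (B : Matrix (Fin nx) ι ℝ)
    (u : ℕ → ι → ℝ) (x : ℕ → Fin nx → ℝ) (K T : ℕ)
    (hTK : T ≤ K) (hnxT : nx ≤ T)
    (hK : nx = 0 ∨ T + nx ≤ K)
    (hrec : ∀ k < K, x (k+1) = A.mulVec (x k) + B.mulVec (u k))
    (hctrb : ∀ w : Fin nx → ℝ, Matrix.vecMul w (ctrbMat A B) = 0 → w = 0)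
    (hPE : ∀ w : Fin (T+nx) × ι → ℝ, Matrix.vecMul w (Hankel (T+nx) K u) = 0 → w = 0)
    (ξ : Fin nx → ℝ) (η : Fin T × ι → ℝ)
    (hker : ∀ j : Fin (K - T + 1),
      (ξ ⬝ᵥ x (j : ℕ)) + ∑ p : Fin T × ι, η p * u ((p.1:ℕ) + (j:ℕ)) p.2 = 0) :
    ξ = 0 ∧ η = 0 := by
  classical
  set L := T + nx with hL
  set c : ℕ → ℕ → ι → ℝ := fun s r i =>
    if r < s then Matrix.vecMul ξ (A^(s-1-r) * B) i
    else if h : r - s < T then η (⟨r - s, h⟩, i) else 0 with hc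
  have hα := Matrix.charpoly_natDegree_eq_dim A
  simp only [Fintype.card_fin] at hα
  set α : ℕ → ℝ := fun s => (A.charpoly).coeff s with hαdef
  have hαnx : α nx = 1 := by
    have := (Matrix.charpoly_monic A).coeff_natDegree
    rwa [hα] at this
  have hCH : ∑ s ∈ Finset.range (nx+1), α s • A^s = 0 := by
    have := Matrix.aeval_self_charpoly A
    rwa [Polynomial.aeval_eq_sum_range, hα] at this
  -- the shifted relations
  have Rel : ∀ s ≤ nx, ∀ j : ℕ, j + s ≤ K - T →
      (Matrix.vecMul ξ (A^s)) ⬝ᵥ x j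
        + ∑ r ∈ Finset.range (s + T), (c s r ⬝ᵥ u (j + r)) = 0 := by
    intro s hs j hj
    have hcol : j + s < K - T + 1 := by omega
    have hbase := hker ⟨j + s, hcol⟩
    simp only [Fin.val_mk] at hbase
    have hx := state_evol A B u x K hrec s j (by omega)
    have hdx : ξ ⬝ᵥ x (j + s)
        = (Matrix.vecMul ξ (A^s)) ⬝ᵥ x j
          + ∑ r ∈ Finset.range s, (c s r ⬝ᵥ u (j + r)) := by
      rw [hx, dotProduct_add, Matrix.dotProduct_mulVec, dot_sum]
      congr 1
      refine Finset.sum_congr rfl fun r hr => ?_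
      rw [Finset.mem_range] at hr
      rw [Matrix.dotProduct_mulVec]
      refine Finset.sum_congr rfl fun i _ => ?_
      simp only [hc, if_pos hr]
    have hdu : ∑ p : Fin T × ι, η p * u ((p.1:ℕ) + (j+s)) p.2
        = ∑ r ∈ Finset.range T, (c s (s + r) ⬝ᵥ u (j + (s + r))) := by
      rw [Fintype.sum_prod_type]
      rw [Finset.sum_range fun r => (c s (s + r) ⬝ᵥ u (j + (s + r)))]
      refine Finset.sum_congr rfl fun t _ => ?_
      simp only [dotProduct]
      refine Finset.sum_congr rfl fun i _ => ?_
      have h1 : ¬ (s + (t:ℕ) < s) := by omega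
      have h2 : s + (t:ℕ) - s = (t:ℕ) := by omega
      simp only [hc, if_neg h1, h2, t.isLt, dif_pos]
      rw [show (⟨(t:ℕ), t.isLt⟩ : Fin T) = t from rfl]
      ring_nf
    rw [Finset.sum_range_add, ← add_assoc, ← hdx, ← hdu]
    exact hbase
  -- Step 2: build the combined annihilator and apply PE
  have hcolj : ∀ j : Fin (K - L + 1), (j:ℕ) + nx ≤ K - T := by
    intro j
    have hjl := j.isLt
    rcases hK with h0 | h1 <;> omega
  set η'f : Fin L × ι → ℝ := fun p => ∑ s ∈ Finset.range (nx+1), α s * c s (p.1:ℕ) p.2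
    with hη'f
  have hCHv : ∀ v : Fin nx → ℝ,
      ∑ s ∈ Finset.range (nx+1), α s • ((A^s).mulVec v) = 0 := by
    intro v
    have h := congrArg (fun M : Matrix (Fin nx) (Fin nx) ℝ => M.mulVec v) hCH
    simp only [Matrix.zero_mulVec] at h
    rw [← h]
    rw [show (∑ s ∈ Finset.range (nx+1), α s • A^s).mulVec v
        = ∑ s ∈ Finset.range (nx+1), ((α s • A^s).mulVec v) by
      funext i
      simp only [Matrix.mulVec, dotProduct, Finset.sum_apply, Matrix.sum_apply,
        Finset.sum_mul]
      rw [Finset.sum_comm]]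
    exact Finset.sum_congr rfl fun s _ => by rw [Matrix.smul_mulVec]
  have hvm : Matrix.vecMul η'f (Hankel L K u) = 0 := by
    funext j
    have hjb : (j:ℕ) + nx ≤ K - T := hcolj j
    have hval : Matrix.vecMul η'f (Hankel L K u) j
        = ∑ p : Fin L × ι, η'f p * u ((p.1:ℕ) + (j:ℕ)) p.2 := by
      simp [Matrix.vecMul, dotProduct, Hankel]
    rw [hval]
    have pad : ∀ s ∈ Finset.range (nx+1), ∀ jn : ℕ, jn + nx ≤ K - T →
        (∑ t : Fin L, (c s (t:ℕ) ⬝ᵥ u (jn + (t:ℕ))))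
          = - (Matrix.vecMul ξ (A^s) ⬝ᵥ x jn) := by
      intro s hs jn hjn
      rw [Finset.mem_range] at hs
      rw [Fin.sum_univ_eq_sum_range (fun r => c s r ⬝ᵥ u (jn + r)) L]
      have hLs : Finset.range L = Finset.range ((s + T) + (nx - s)) := by
        congr 1; omega
      rw [hLs, Finset.sum_range_add]
      have h2 : ∑ r ∈ Finset.range (nx - s),
          (c s (s + T + r) ⬝ᵥ u (jn + (s + T + r))) = 0 := by
        refine Finset.sum_eq_zero fun r _ => ?_
        have hz : c s (s + T + r) = (0 : ι → ℝ) := by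
          funext i; simp only [hc]; rw [if_neg (by omega), dif_neg (by omega)]; rfl
        rw [hz, zero_dotProduct]
      rw [h2, add_zero]
      have hrel := Rel s (by omega) jn (by omega)
      linarith [hrel]
    calc ∑ p : Fin L × ι, η'f p * u ((p.1:ℕ) + (j:ℕ)) p.2
        = ∑ p : Fin L × ι, ∑ s ∈ Finset.range (nx+1),
            α s * (c s (p.1:ℕ) p.2 * u ((j:ℕ) + (p.1:ℕ)) p.2) := by
          refine Finset.sum_congr rfl fun p _ => ?_
          rw [hη'f, Finset.sum_mul]
          refine Finset.sum_congr rfl fun s _ => ?_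
          rw [Nat.add_comm (p.1:ℕ) (j:ℕ)]; ring
      _ = ∑ s ∈ Finset.range (nx+1), ∑ p : Fin L × ι,
            α s * (c s (p.1:ℕ) p.2 * u ((j:ℕ) + (p.1:ℕ)) p.2) := Finset.sum_comm
      _ = ∑ s ∈ Finset.range (nx+1), α s * ∑ t : Fin L,
            (c s (t:ℕ) ⬝ᵥ u ((j:ℕ) + (t:ℕ))) := by
          refine Finset.sum_congr rfl fun s _ => ?_
          rw [← Finset.mul_sum, Fintype.sum_prod_type]
          simp [dotProduct]
      _ = ∑ s ∈ Finset.range (nx+1), α s * (- (Matrix.vecMul ξ (A^s) ⬝ᵥ x (j:ℕ))) := by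
          refine Finset.sum_congr rfl fun s hs => by rw [pad s hs (j:ℕ) hjb]
      _ = - (ξ ⬝ᵥ ∑ s ∈ Finset.range (nx+1), α s • ((A^s).mulVec (x (j:ℕ)))) := by
          rw [dot_sum, ← Finset.sum_neg_distrib]
          refine Finset.sum_congr rfl fun s _ => ?_
          rw [dotProduct_smul, smul_eq_mul, ← Matrix.dotProduct_mulVec]
          ring
      _ = 0 := by rw [hCHv, dotProduct_zero, neg_zero]
  have hη'0 : ∀ (t : Fin L) (i : ι),
      ∑ s ∈ Finset.range (nx+1), α s * c s (t:ℕ) i = 0 := by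
    intro t i
    have := congrFun (hPE η'f hvm) (t, i)
    simpa [hη'f] using this
  -- Step 3a: η = 0
  have hηzero : ∀ n : ℕ, ∀ (t : Fin T) (i : ι), T - (t:ℕ) ≤ n → η (t, i) = 0 := by
    intro n
    induction n with
    | zero => intro t i ht; exact absurd t.isLt (by omega)
    | succ n IH =>
      intro t i ht
      have key := hη'0 ⟨nx + (t:ℕ), by omega⟩ i
      rw [Finset.sum_range_succ] at key
      have hlast : c nx (nx + (t:ℕ)) i = η (t, i) := by
        simp only [hc]
        rw [if_neg (by omega)]
        have ht2 : nx + (t:ℕ) - nx < T := by omega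
        rw [dif_pos ht2]
        have heq : (⟨nx + (t:ℕ) - nx, ht2⟩ : Fin T) = t := by
          apply Fin.ext; simp
        rw [heq]
      have hrest : ∑ s ∈ Finset.range nx, α s * c s (nx + (t:ℕ)) i = 0 := by
        refine Finset.sum_eq_zero fun s hs => ?_
        rw [Finset.mem_range] at hs
        have hcz : c s (nx + (t:ℕ)) i = 0 := by
          simp only [hc]
          rw [if_neg (by omega)]
          by_cases hlt : nx + (t:ℕ) - s < T
          · rw [dif_pos hlt]
            exact IH ⟨nx + (t:ℕ) - s, hlt⟩ i (by simp; omega)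
          · rw [dif_neg hlt]
        rw [hcz, mul_zero]
      rw [hrest, hαnx, zero_add, one_mul] at key
      rwa [hlast] at key
  have hη : η = 0 := by
    funext p
    obtain ⟨t, i⟩ := p
    exact hηzero T t i (by omega)
  -- Step 3b: ξ = 0
  have hξ : ξ = 0 := by
    by_cases hnx0 : nx = 0
    · exact funext fun i => absurd i.isLt (by omega)
    · have Cq : ∀ q, q < nx → Matrix.vecMul ξ (A^q * B) = 0 := by
        intro q
        induction q using Nat.strong_induction_on with
        | _ q IHq =>
          intro hq
          funext i
          have key := hη'0 ⟨nx - 1 - q, by omega⟩ i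
          rw [Finset.sum_range_succ] at key
          have hr : (⟨nx - 1 - q, by omega⟩ : Fin L).val = nx - 1 - q := rfl
          rw [hr] at key
          have hlast : c nx (nx - 1 - q) i = Matrix.vecMul ξ (A^q * B) i := by
            simp only [hc]
            rw [if_pos (by omega)]
            rw [show nx - 1 - (nx - 1 - q) = q from by omega]
          have hrest : ∑ s ∈ Finset.range nx, α s * c s (nx - 1 - q) i = 0 := by
            refine Finset.sum_eq_zero fun s hs => ?_
            rw [Finset.mem_range] at hs
            have hcz : c s (nx - 1 - q) i = 0 := by
              simp only [hc]
              by_cases hlt : nx - 1 - q < s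
              · rw [if_pos hlt]
                have := IHq (s - 1 - (nx - 1 - q)) (by omega) (by omega)
                exact congrFun this i
              · rw [if_neg hlt, dif_pos (by omega)]
                rw [hη]; rfl
            rw [hcz, mul_zero]
          rw [hrest, hαnx, zero_add, one_mul] at key
          rw [hlast] at key
          simpa using key
      apply hctrb
      funext p
      have : Matrix.vecMul ξ (ctrbMat A B) p = Matrix.vecMul ξ (A^(p.1:ℕ) * B) p.2 := by
        simp [Matrix.vecMul, dotProduct, ctrbMat]
      rw [this, Cq (p.1:ℕ) p.1.isLt]
      rfl
  exact ⟨hξ, hη⟩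

lemma comb_traj {nx : ℕ} {ι κ : Type*} [Fintype ι]
    (A : Matrix (Fin nx) (Fin nx) ℝ) (B : Matrix (Fin nx) ι ℝ)
    (C : Matrix κ (Fin nx) ℝ) (D : Matrix κ ι ℝ)
    (K T : ℕ) (hTK : T ≤ K)
    (u : ℕ → ι → ℝ) (x : ℕ → Fin nx → ℝ) (y : ℕ → κ → ℝ)
    (hd : ∀ k < K, x (k+1) = A.mulVec (x k) + B.mulVec (u k)
        ∧ y k = C.mulVec (x k) + D.mulVec (u k))
    (g : Fin (K - T + 1) → ℝ) (k : ℕ) (hk : k < T) :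
    (∑ j : Fin (K - T + 1), g j • x ((k+1) + (j:ℕ)))
        = A.mulVec (∑ j : Fin (K - T + 1), g j • x (k + (j:ℕ)))
          + B.mulVec (∑ j : Fin (K - T + 1), g j • u (k + (j:ℕ)))
    ∧ (∑ j : Fin (K - T + 1), g j • y (k + (j:ℕ)))
        = C.mulVec (∑ j : Fin (K - T + 1), g j • x (k + (j:ℕ)))
          + D.mulVec (∑ j : Fin (K - T + 1), g j • u (k + (j:ℕ))) := by
  have hkj : ∀ j : Fin (K - T + 1), k + (j:ℕ) < K := by
    intro j; have := j.isLt; omega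
  constructor
  · rw [mulVec_sum_smul, mulVec_sum_smul, ← Finset.sum_add_distrib]
    refine Finset.sum_congr rfl fun j _ => ?_
    rw [← smul_add, show (k+1) + (j:ℕ) = (k + (j:ℕ)) + 1 by omega, (hd _ (hkj j)).1]
  · rw [mulVec_sum_smul, mulVec_sum_smul, ← Finset.sum_add_distrib]
    refine Finset.sum_congr rfl fun j _ => ?_
    rw [← smul_add, (hd _ (hkj j)).2]

end DDSimAux

/-- **Data-driven simulation for the innovations form.** The innovations form
is the LTI system with extended input `ū = col(u, e)` (index type
`Fin n_u ⊕ Fin n_y`), input matrix `B̄ = [B_u, K]` and feedthrough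
`D̄ = [D, I]`. Given a length-`K` data trajectory with `(A, [B_u, K])`
controllable, `(A, C)` observable, extended input persistently exciting of
order `Tp + Tf + n_x`, a past length-`Tp` trajectory `(ū_p, y_p)` with
`Tp ≥ n_x`, and a future extended input `ū_f`: there is a unique future output
`y_f` such that the concatenation is a length-`(Tp+Tf)` trajectory, and `y_f`
equals this unique continuation iff a common `g` reproduces `ū_p, ū_f, y_p,
y_f` from the partitioned Hankel matrices. -/
theorem statement3
    {nx nu ny K Tp Tf : ℕ}
    (A : Matrix (Fin nx) (Fin nx) ℝ) (Bu : Matrix (Fin nx) (Fin nu) ℝ)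
    (Kmat : Matrix (Fin nx) (Fin ny) ℝ)
    (C : Matrix (Fin ny) (Fin nx) ℝ) (D : Matrix (Fin ny) (Fin nu) ℝ)
    (ud : ℕ → (Fin nu ⊕ Fin ny) → ℝ) (yd : ℕ → Fin ny → ℝ)
    (hTpTfK : Tp + Tf ≤ K)
    (hTp : nx ≤ Tp)
    (hdata : IsTraj A (Matrix.fromCols Bu Kmat) C
        (Matrix.fromCols D (1 : Matrix (Fin ny) (Fin ny) ℝ)) K ud yd)
    (hctrb : (ctrbMat A (Matrix.fromCols Bu Kmat)).rank = nx)
    (hobsv : (obsvMat A C).rank = nx)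
    (hPE : (Hankel (Tp + Tf + nx) K ud).rank = (nu + ny) * (Tp + Tf + nx))
    (up : ℕ → (Fin nu ⊕ Fin ny) → ℝ) (yp : ℕ → Fin ny → ℝ)
    (hpast : IsTraj A (Matrix.fromCols Bu Kmat) C
        (Matrix.fromCols D (1 : Matrix (Fin ny) (Fin ny) ℝ)) Tp up yp)
    (uf : Fin Tf → (Fin nu ⊕ Fin ny) → ℝ) :
    (∃! yf : Fin Tf → Fin ny → ℝ,
        IsTraj A (Matrix.fromCols Bu Kmat) C
          (Matrix.fromCols D (1 : Matrix (Fin ny) (Fin ny) ℝ))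
          (Tp + Tf) (glue Tp Tf up uf) (glue Tp Tf yp yf)) ∧
    (∀ yf : Fin Tf → Fin ny → ℝ,
        IsTraj A (Matrix.fromCols Bu Kmat) C
          (Matrix.fromCols D (1 : Matrix (Fin ny) (Fin ny) ℝ))
          (Tp + Tf) (glue Tp Tf up uf) (glue Tp Tf yp yf) ↔
        ∃ g : Fin (K - (Tp + Tf) + 1) → ℝ,
          stack Tp up = (HankelPast Tp (K - (Tp + Tf) + 1) ud).mulVec g ∧
          (fun q : Fin Tf × (Fin nu ⊕ Fin ny) => uf q.1 q.2) =
            (HankelFut Tp Tf (K - (Tp + Tf) + 1) ud).mulVec g ∧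
          stack Tp yp = (HankelPast Tp (K - (Tp + Tf) + 1) yd).mulVec g ∧
          (fun q : Fin Tf × Fin ny => yf q.1 q.2) =
            (HankelFut Tp Tf (K - (Tp + Tf) + 1) yd).mulVec g) := by
  classical
  obtain ⟨xd, hxd⟩ := hdata
  obtain ⟨xp, hxp⟩ := hpast
  set Bb := Matrix.fromCols Bu Kmat with hBb
  set Db := Matrix.fromCols D (1 : Matrix (Fin ny) (Fin ny) ℝ) with hDb
  set T := Tp + Tf with hT
  set Mc := K - T + 1 with hMc
  -- basic consequences of the rank hypotheses
  have hctrb' : ∀ w : Fin nx → ℝ, Matrix.vecMul w (ctrbMat A Bb) = 0 → w = 0 :=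
    vecMul_inj_of_rank _ (by simpa using hctrb)
  have hobsv' : ∀ v : Fin nx → ℝ, (obsvMat A C).mulVec v = 0 → v = 0 :=
    mulVec_inj_of_rank _ (by simpa using hobsv)
  have hPE' : ∀ w : Fin (T + nx) × (Fin nu ⊕ Fin ny) → ℝ,
      Matrix.vecMul w (Hankel (T + nx) K ud) = 0 → w = 0 := by
    refine vecMul_inj_of_rank _ ?_
    rw [hPE]
    simp [Fintype.card_prod, Fintype.card_sum, Nat.mul_comm]
  have hK' : nx = 0 ∨ T + nx ≤ K := by
    by_cases hnx0 : nx = 0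
    · exact Or.inl hnx0
    · right
      have hι1 : 1 ≤ nu + ny := by
        by_contra hc
        have h0 : nu = 0 ∧ ny = 0 := by omega
        obtain ⟨h1, h2⟩ := h0
        subst h1; subst h2
        have := hctrb' (fun _ => 1) (by
          funext p
          exact (IsEmpty.false p.2).elim)
        have h1 := congrFun this ⟨0, Nat.pos_of_ne_zero hnx0⟩
        simpa using h1
      have hle := Matrix.rank_le_card_width (Hankel (T + nx) K ud)
      rw [hPE] at hle
      simp only [Fintype.card_fin] at hle
      have h2 : T + nx ≤ (nu + ny) * (T + nx) := Nat.le_mul_of_pos_left _ (by omega)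
      omega
  -- glue facts
  set U : ℕ → (Fin nu ⊕ Fin ny) → ℝ := glue Tp Tf up uf with hU
  have hUp : ∀ k, k < Tp → U k = up k := by
    intro k hk; simp [hU, glue, hk]
  have hUf : ∀ (k : ℕ) (h1 : ¬ k < Tp) (h2 : k - Tp < Tf), U k = uf ⟨k - Tp, h2⟩ := by
    intro k h1 h2; simp only [hU, glue, if_neg h1, dif_pos h2]
  have hYp : ∀ (yf : Fin Tf → Fin ny → ℝ) (k : ℕ), k < Tp →
      glue Tp Tf yp yf k = yp k := by
    intro yf k hk; simp [glue, hk]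
  have hYf : ∀ (yf : Fin Tf → Fin ny → ℝ) (k : ℕ) (h1 : ¬ k < Tp) (h2 : k - Tp < Tf),
      glue Tp Tf yp yf k = yf ⟨k - Tp, h2⟩ := by
    intro yf k h1 h2; simp only [glue, if_neg h1, dif_pos h2]
  -- simulated state
  let sim : ℕ → (Fin nx → ℝ) := fun k =>
    Nat.rec (xp 0) (fun k xk => A.mulVec xk + Bb.mulVec (U k)) k
  have hsimrec : ∀ k, sim (k+1) = A.mulVec (sim k) + Bb.mulVec (U k) := fun k => rfl
  have hsimp : ∀ k, k ≤ Tp → sim k = xp k := by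
    refine state_unique A Bb U sim xp Tp (fun k hk => hsimrec k) (fun k hk => ?_) rfl
    rw [(hxp k hk).1, hUp k hk]
  -- existence of a continuation
  set yf0 : Fin Tf → Fin ny → ℝ :=
    fun t => C.mulVec (sim (Tp + (t:ℕ))) + Db.mulVec (uf t) with hyf0
  have hex : IsTraj A Bb C Db T U (glue Tp Tf yp yf0) := by
    refine ⟨sim, fun k hk => ⟨hsimrec k, ?_⟩⟩
    by_cases hkp : k < Tp
    · rw [hYp yf0 k hkp, (hxp k hkp).2, hsimp k hkp.le, hUp k hkp]
    · have h2 : k - Tp < Tf := by omega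
      rw [hYf yf0 k hkp h2, hyf0]
      show C.mulVec (sim (Tp + (k - Tp))) + Db.mulVec (uf ⟨k - Tp, h2⟩) = _
      rw [show Tp + (k - Tp) = k by omega, ← hUf k hkp h2]
  -- uniqueness of the continuation
  have huniq : ∀ yf1 yf2, IsTraj A Bb C Db T U (glue Tp Tf yp yf1) →
      IsTraj A Bb C Db T U (glue Tp Tf yp yf2) → yf1 = yf2 := by
    rintro yf1 yf2 ⟨x1, h1⟩ ⟨x2, h2⟩
    have hdrec : ∀ k < T, (fun k => x1 k - x2 k) (k+1)
        = A.mulVec ((fun k => x1 k - x2 k) k)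
          + Bb.mulVec ((fun _ : ℕ => (0 : (Fin nu ⊕ Fin ny) → ℝ)) k) := by
      intro k hk
      simp only
      rw [(h1 k hk).1, (h2 k hk).1, Matrix.mulVec_zero, add_zero, Matrix.mulVec_sub]
      abel
    have hd := state_evol A Bb (fun _ => 0) (fun k => x1 k - x2 k) T hdrec
    have hCd : ∀ k, k < Tp → C.mulVec (x1 k - x2 k) = 0 := by
      intro k hk
      have e1 := (h1 k (by omega)).2
      have e2 := (h2 k (by omega)).2
      rw [hYp yf1 k hk] at e1
      rw [hYp yf2 k hk] at e2
      have e3 : C.mulVec (x1 k) + Db.mulVec (U k)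
          = C.mulVec (x2 k) + Db.mulVec (U k) := by rw [← e1, ← e2]
      rw [Matrix.mulVec_sub, sub_eq_zero]
      exact add_right_cancel e3
    have hd0 : x1 0 - x2 0 = 0 := by
      apply hobsv'
      funext p
      have hplt : (p.1 : ℕ) < nx := p.1.isLt
      have hds := hd (p.1:ℕ) 0 (by omega)
      simp only [Nat.zero_add, Matrix.mulVec_zero, Finset.sum_const_zero, add_zero] at hds
      have hrow : (obsvMat A C).mulVec (x1 0 - x2 0) p
          = (C.mulVec ((A^(p.1:ℕ)).mulVec (x1 0 - x2 0))) p.2 := by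
        simp [obsvMat, Matrix.mulVec, dotProduct, Matrix.mul_apply,
          Finset.sum_mul, Finset.mul_sum, mul_assoc]
        exact Finset.sum_comm
      rw [hrow, ← hds, hCd (p.1:ℕ) (by omega)]
      rfl
    have hx12 : ∀ k, k ≤ T → x1 k = x2 k := by
      refine state_unique A Bb U x1 x2 T (fun k hk => (h1 k hk).1)
        (fun k hk => (h2 k hk).1) ?_
      have := sub_eq_zero.mp hd0
      exact this
    funext t
    have h1' : ¬ (Tp + (t:ℕ) < Tp) := by omega
    have h2' : Tp + (t:ℕ) - Tp < Tf := by have := t.isLt; omega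
    have hk : Tp + (t:ℕ) < T := by have := t.isLt; omega
    have e1 := (h1 (Tp + (t:ℕ)) hk).2
    have e2 := (h2 (Tp + (t:ℕ)) hk).2
    rw [hYf yf1 _ h1' h2'] at e1
    rw [hYf yf2 _ h1' h2'] at e2
    have hfin : (⟨Tp + (t:ℕ) - Tp, h2'⟩ : Fin Tf) = t := by
      apply Fin.ext; simp
    rw [hfin] at e1 e2
    rw [e1, e2, hx12 _ hk.le]
  refine ⟨⟨yf0, hex, fun y hy => huniq y yf0 hy hex⟩, ?_⟩
  -- the Hankel characterization
  set G : Matrix (Fin nx ⊕ (Fin T × (Fin nu ⊕ Fin ny))) (Fin Mc) ℝ :=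
    Matrix.fromRows (fun a j => xd (j:ℕ) a) (Hankel T K ud) with hG
  have hGsurj : Function.Surjective G.mulVec := by
    apply mulVec_surj_of_vecMul_inj
    intro w hw
    have hwill := willems A Bb ud xd K T hTpTfK (by omega) hK'
      (fun k hk => (hxd k hk).1) hctrb' hPE'
      (fun a => w (Sum.inl a)) (fun p => w (Sum.inr p)) ?_
    · funext i
      cases i with
      | inl a => exact congrFun hwill.1 a
      | inr p => exact congrFun hwill.2 p
    · intro j
      have hj := congrFun hw j
      simp only [Matrix.vecMul, dotProduct, Fintype.sum_sum_type, hG,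
        Matrix.fromRows_apply_inl, Matrix.fromRows_apply_inr, Hankel, Matrix.of_apply, Sum.elim_inl, Sum.elim_inr,
        Pi.zero_apply] at hj
      simp only [Matrix.fromRows, Matrix.of_apply, Sum.elim, Hankel] at hj
      simpa [dotProduct] using hj
  -- pointwise value of Hankel-type mulVec
  have hmvP : ∀ (g : Fin Mc → ℝ) {κ : Type} [Fintype κ] (ζ : ℕ → κ → ℝ) (p : Fin Tp × κ),
      (HankelPast Tp Mc ζ).mulVec g p = (∑ j : Fin Mc, g j • ζ ((p.1:ℕ) + (j:ℕ))) p.2 := by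
    intro g κ _ ζ p
    simp [HankelPast, Matrix.mulVec, dotProduct, Finset.sum_apply, mul_comm]
  have hmvF : ∀ (g : Fin Mc → ℝ) {κ : Type} [Fintype κ] (ζ : ℕ → κ → ℝ) (p : Fin Tf × κ),
      (HankelFut Tp Tf Mc ζ).mulVec g p
        = (∑ j : Fin Mc, g j • ζ (Tp + (p.1:ℕ) + (j:ℕ))) p.2 := by
    intro g κ _ ζ p
    simp [HankelFut, Matrix.mulVec, dotProduct, Finset.sum_apply, mul_comm]
  intro yf
  constructor
  · -- trajectory → Hankel representation
    rintro ⟨xh, hxh⟩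
    obtain ⟨g, hg⟩ := hGsurj (Sum.elim (xh 0) (fun p : Fin T × (Fin nu ⊕ Fin ny) =>
      U (p.1:ℕ) p.2))
    have hg1 : (∑ j : Fin Mc, g j • xd (0 + (j:ℕ))) = xh 0 := by
      funext a
      have h := congrFun hg (Sum.inl a)
      simp only [Matrix.mulVec, dotProduct, hG, Matrix.fromRows_apply_inl,
        Matrix.of_apply, Sum.elim_inl] at h
      simp only [Matrix.fromRows, Matrix.of_apply, Sum.elim] at h
      simpa [Finset.sum_apply, mul_comm] using h
    have hg2 : ∀ k, ∀ hk : k < T, (∑ j : Fin Mc, g j • ud (k + (j:ℕ))) = U k := by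
      intro k hk
      funext i
      have h := congrFun hg (Sum.inr (⟨k, hk⟩, i))
      simp only [Matrix.mulVec, dotProduct, hG, Matrix.fromRows_apply_inr, Hankel,
        Matrix.of_apply, Sum.elim_inr] at h
      simp only [Matrix.fromRows, Matrix.of_apply, Sum.elim, Hankel] at h
      simpa [Finset.sum_apply, mul_comm] using h
    have hmatch : ∀ k, k ≤ T → (∑ j : Fin Mc, g j • xd (k + (j:ℕ))) = xh k := by
      refine state_unique A Bb U (fun k => ∑ j : Fin Mc, g j • xd (k + (j:ℕ))) xh T
        (fun k hk => ?_) (fun k hk => (hxh k hk).1) hg1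
      beta_reduce
      rw [(comb_traj A Bb C Db K T hTpTfK ud xd yd hxd g k hk).1, hg2 k hk]
    have hYg : ∀ k, ∀ hk : k < T,
        glue Tp Tf yp yf k = (∑ j : Fin Mc, g j • yd (k + (j:ℕ))) := by
      intro k hk
      rw [(comb_traj A Bb C Db K T hTpTfK ud xd yd hxd g k hk).2,
        hmatch k hk.le, hg2 k hk]
      exact (hxh k hk).2
    refine ⟨g, ?_, ?_, ?_, ?_⟩
    · funext p
      have hk : (p.1:ℕ) < T := by have := p.1.isLt; omega
      rw [hmvP g ud p, hg2 (p.1:ℕ) hk]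
      show up (p.1:ℕ) p.2 = U (p.1:ℕ) p.2
      rw [hUp (p.1:ℕ) p.1.isLt]
    · funext p
      have h1 : ¬ (Tp + (p.1:ℕ) < Tp) := by omega
      have h2 : Tp + (p.1:ℕ) - Tp < Tf := by have := p.1.isLt; omega
      have hk : Tp + (p.1:ℕ) < T := by have := p.1.isLt; omega
      rw [hmvF g ud p, hg2 (Tp + (p.1:ℕ)) hk, hUf _ h1 h2]
      show uf p.1 p.2 = uf ⟨Tp + (p.1:ℕ) - Tp, h2⟩ p.2
      congr 1
      apply Fin.ext
      simp
    · funext p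
      have hk : (p.1:ℕ) < T := by have := p.1.isLt; omega
      rw [hmvP g yd p, ← hYg (p.1:ℕ) hk]
      show yp (p.1:ℕ) p.2 = glue Tp Tf yp yf (p.1:ℕ) p.2
      rw [hYp yf (p.1:ℕ) p.1.isLt]
    · funext p
      have h1 : ¬ (Tp + (p.1:ℕ) < Tp) := by omega
      have h2 : Tp + (p.1:ℕ) - Tp < Tf := by have := p.1.isLt; omega
      have hk : Tp + (p.1:ℕ) < T := by have := p.1.isLt; omega
      rw [hmvF g yd p, ← hYg (Tp + (p.1:ℕ)) hk, hYf yf _ h1 h2]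
      show yf p.1 p.2 = yf ⟨Tp + (p.1:ℕ) - Tp, h2⟩ p.2
      congr 1
      apply Fin.ext
      simp
  · -- Hankel representation → trajectory
    rintro ⟨g, hgu_p, hgu_f, hgy_p, hgy_f⟩
    have hUk : ∀ k, k < T → U k = (∑ j : Fin Mc, g j • ud (k + (j:ℕ))) := by
      intro k hk
      funext i
      by_cases hkp : k < Tp
      · have h := congrFun hgu_p (⟨k, hkp⟩, i)
        rw [hmvP g ud (⟨k, hkp⟩, i)] at h
        rw [hUp k hkp]
        exact h
      · have h2 : k - Tp < Tf := by omega
        have h := congrFun hgu_f (⟨k - Tp, h2⟩, i)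
        rw [hmvF g ud (⟨k - Tp, h2⟩, i)] at h
        rw [hUf k hkp h2]
        simp only [Fin.val_mk] at h ⊢
        rw [show Tp + (k - Tp) = k from by omega] at h
        exact h
    have hYk : ∀ k, k < T → glue Tp Tf yp yf k = (∑ j : Fin Mc, g j • yd (k + (j:ℕ))) := by
      intro k hk
      funext o
      by_cases hkp : k < Tp
      · have h := congrFun hgy_p (⟨k, hkp⟩, o)
        rw [hmvP g yd (⟨k, hkp⟩, o)] at h
        rw [hYp yf k hkp]
        exact h
      · have h2 : k - Tp < Tf := by omega
        have h := congrFun hgy_f (⟨k - Tp, h2⟩, o)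
        rw [hmvF g yd (⟨k - Tp, h2⟩, o)] at h
        rw [hYf yf k hkp h2]
        simp only [Fin.val_mk] at h ⊢
        rw [show Tp + (k - Tp) = k from by omega] at h
        exact h
    refine ⟨fun k => ∑ j : Fin Mc, g j • xd (k + (j:ℕ)), fun k hk => ?_⟩
    obtain ⟨hrec, hout⟩ := comb_traj A Bb C Db K T hTpTfK ud xd yd hxd g k hk
    beta_reduce
    constructor
    · rw [hrec, hUk k hk]
    · rw [hYk k hk, hout, hUk k hk]
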